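/- Let K ≥ 1 be an integer and R′ > 0. Then lim_{M → ∞} ( 1 + K·( 2^{R′/(K·M)} − 1 ) )^M = 2^{R′}. Consequently, in multi-round coding of a one-sided exponential source with K independent encodings per round and total sum-rate R′ split evenly over M rounds, the residual parameter λ_{M+1} = λ₁·(1 + K(2^{R′/(KM)} − 1))^M tends to λ₁·2^{R′} as M → ∞, so the final distortion tends to λ₁^{−1}·2^{−R′}, the distortion-rate function at total rate R′; i.e., the scheme is asymptotically rate-distortion optimal as the number of rounds tends to infinity. -/

import Mathlib

open Filter Real Topology


/-- STATEMENT 16: `lim_{M → ∞} (1 + K·(2^{R′/(K·M)} − 1))^M = 2^{R′}`.  Consequently, in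
multi-round coding of a one-sided exponential source with `K` independent encodings per round
and total sum-rate `R′` split evenly over `M` rounds, the residual parameter
`λ_{M+1} = λ₁·(1 + K(2^{R′/(KM)} − 1))^M` tends to `λ₁·2^{R′}` as `M → ∞`, so the final
distortion tends to `λ₁^{−1}·2^{−R′}`, the distortion-rate function at total rate `R′`: the
scheme is asymptotically rate-distortion optimal as the number of rounds tends to infinity. -/
theorem exp_source_multiround_optimal (K : ℕ) (hK : 1 ≤ K) (R' : ℝ) (hR : 0 < R')
    (lam1 : ℝ) (hlam : 0 < lam1) :
    Filter.Tendsto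
      (fun M : ℕ => (1 + (K : ℝ) * ((2 : ℝ) ^ (R' / ((K : ℝ) * M)) - 1)) ^ M)
      Filter.atTop (nhds ((2 : ℝ) ^ R')) ∧
    Filter.Tendsto
      (fun M : ℕ => (lam1 * (1 + (K : ℝ) * ((2 : ℝ) ^ (R' / ((K : ℝ) * M)) - 1)) ^ M)⁻¹)
      Filter.atTop (nhds (lam1⁻¹ * (2 : ℝ) ^ (-R'))) := by
  have hK0 : (0:ℝ) < K := by exact_mod_cast hK
  set a : ℕ → ℝ := fun M => (K : ℝ) * ((2 : ℝ) ^ (R' / ((K : ℝ) * M)) - 1) with ha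
  set h : ℕ → ℝ := fun M => R' / ((K : ℝ) * M) with hh
  -- h M → 0 within ≠ 0
  have hh0 : Tendsto h atTop (nhds 0) := by
    have h1 : Tendsto (fun M : ℕ => (K : ℝ) * M) atTop atTop :=
      (tendsto_natCast_atTop_atTop).const_mul_atTop hK0
    simpa [hh, div_eq_mul_inv] using h1.inv_tendsto_atTop.const_mul R'
  have hhpos : ∀ᶠ M : ℕ in atTop, 0 < h M := by
    filter_upwards [eventually_ge_atTop 1] with M hM
    have : (0:ℝ) < M := by exact_mod_cast hM
    exact div_pos hR (by positivity)
  have hhne : Tendsto h atTop (𝓝[≠] (0:ℝ)) :=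
    tendsto_nhdsWithin_of_tendsto_nhds_of_eventually_within _ hh0
      (hhpos.mono fun M hM => ne_of_gt hM)
  -- derivative of 2^x at 0
  have hd : HasDerivAt (fun x : ℝ => (2:ℝ) ^ x) (Real.log 2) 0 := by
    have h1 : HasDerivAt (fun x : ℝ => Real.exp (Real.log 2 * x))
        (Real.exp (Real.log 2 * 0) * (Real.log 2 * 1)) 0 :=
      (Real.hasDerivAt_exp (Real.log 2 * 0)).comp 0 ((hasDerivAt_id 0).const_mul (Real.log 2))
    simp only [mul_zero, Real.exp_zero, one_mul, mul_one] at h1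
    convert h1 using 2 with x
    rw [Real.rpow_def_of_pos two_pos]
  have hslope : Tendsto (fun t : ℝ => ((2:ℝ) ^ t - 1) / t) (𝓝[≠] (0:ℝ))
      (nhds (Real.log 2)) := by
    refine (hasDerivAt_iff_tendsto_slope.mp hd).congr fun t => ?_
    simp [slope_def_field]
  -- M * a M → R' * log 2
  have hMa : Tendsto (fun M : ℕ => (M : ℝ) * a M) atTop (nhds (R' * Real.log 2)) := by
    have h1 : Tendsto (fun M : ℕ => R' * (((2:ℝ) ^ h M - 1) / h M)) atTop
        (nhds (R' * Real.log 2)) := ((hslope.comp hhne).const_mul R')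
    apply h1.congr'
    filter_upwards [eventually_ge_atTop 1] with M hM
    have hM0 : (0:ℝ) < M := by exact_mod_cast hM
    have hKM : (K : ℝ) * M ≠ 0 := by positivity
    simp only [ha, hh]
    field_simp
  -- a M → 0, a M > 0 eventually
  have ha0 : Tendsto a atTop (nhds 0) := by
    have hc : Continuous (fun t : ℝ => (K : ℝ) * ((2:ℝ) ^ t - 1)) := by
      have he : (fun t : ℝ => (2:ℝ) ^ t) = fun t => Real.exp (Real.log 2 * t) :=
        funext fun t => Real.rpow_def_of_pos two_pos t
      have hc2 : Continuous (fun t : ℝ => (2:ℝ) ^ t) := by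
        rw [he]; exact Real.continuous_exp.comp (continuous_const.mul continuous_id)
      exact continuous_const.mul (hc2.sub continuous_const)
    have := (hc.tendsto' 0 0 (by simp)).comp hh0
    simpa [ha, hh, Function.comp_def] using this
  have hapos : ∀ᶠ M : ℕ in atTop, 0 < a M := by
    filter_upwards [hhpos] with M hM
    have : (1:ℝ) < (2:ℝ) ^ h M :=
      Real.one_lt_rpow_iff_of_pos two_pos |>.mpr (Or.inl ⟨one_lt_two, hM⟩)
    exact mul_pos hK0 (by linarith)
  -- log(1 + a M)/a M → 1
  have hlogslope : Tendsto (fun x : ℝ => Real.log x / (x - 1)) (𝓝[≠] (1:ℝ)) (nhds 1) := by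
    have h0 := hasDerivAt_iff_tendsto_slope.mp (Real.hasDerivAt_log one_ne_zero)
    rw [inv_one] at h0
    refine h0.congr fun x => ?_
    simp [slope_def_field]
  have h1a : Tendsto (fun M : ℕ => 1 + a M) atTop (𝓝[≠] (1:ℝ)) := by
    apply tendsto_nhdsWithin_of_tendsto_nhds_of_eventually_within
    · simpa using ha0.const_add 1
    · filter_upwards [hapos] with M hM
      simp only [Set.mem_compl_iff, Set.mem_singleton_iff]
      intro hcon
      nlinarith
  have hlogdiv : Tendsto (fun M : ℕ => Real.log (1 + a M) / a M) atTop (nhds 1) := by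
    refine (hlogslope.comp h1a).congr fun M => ?_
    simp [Function.comp, add_sub_cancel_left]
  -- M * log (1 + a M) → R' * log 2
  have hg : Tendsto (fun M : ℕ => (M : ℝ) * Real.log (1 + a M)) atTop
      (nhds (R' * Real.log 2)) := by
    have h1 := hlogdiv.mul hMa
    rw [one_mul] at h1
    apply h1.congr'
    filter_upwards [hapos] with M hM
    field_simp
  have hmain : Tendsto
      (fun M : ℕ => (1 + a M) ^ M) atTop (nhds ((2 : ℝ) ^ R')) := by
    have h1 : Tendsto (fun M : ℕ => Real.exp ((M : ℝ) * Real.log (1 + a M))) atTop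
        (nhds (Real.exp (R' * Real.log 2))) := Real.continuous_exp.continuousAt.tendsto.comp hg
    have hval : Real.exp (R' * Real.log 2) = (2:ℝ) ^ R' := by
      rw [Real.rpow_def_of_pos two_pos, mul_comm]
    rw [hval] at h1
    apply h1.congr'
    filter_upwards [hapos] with M hM
    rw [Real.exp_nat_mul, Real.exp_log (by linarith)]
  constructor
  · exact hmain
  · have hcont : ContinuousAt (fun x : ℝ => (lam1 * x)⁻¹) ((2:ℝ) ^ R') := by
      apply ContinuousAt.inv₀
      · exact (continuous_const.mul continuous_id).continuousAt
      · positivity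
    have := hcont.tendsto.comp hmain
    convert this using 2
    · rfl
    · rw [mul_inv, Real.rpow_neg (by norm_num)]
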